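/- Let I ⊂ ℝ be a bounded closed nondegenerate interval with midpoint ξ = ½(min I + max I), and let f : I → ℝ be measurable. Suppose there exist a, b, c ∈ ℝ such that |f(x) − (a x + b)| ≤ c|x − ξ| for all x ∈ I. Then f ∈ L^∞(I), and for every r > 1 the unique minimizer τ_r^f of t ↦ ‖f − t‖_r satisfies |τ_r^f − f(ξ)| ≤ ½ c λ(I). -/

import Mathlib

open Set MeasureTheory
open scoped ENNReal NNReal

lemma strictConvexOn_abs_rpow {r : ℝ} (hr : 1 < r) :
    StrictConvexOn ℝ univ (fun x : ℝ => |x| ^ r) := by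
  refine ⟨convex_univ, ?_⟩
  rintro x - y - hxy p q hp hq hpq
  simp only [smul_eq_mul]
  by_cases habs : |x| = |y|
  · have hyx : y = -x := by
      rcases abs_eq_abs.1 habs with h | h
      · exact (hxy h).elim
      · linarith
    have hx0 : x ≠ 0 := by rintro rfl; simp [hyx] at hxy
    have h1 : |p * x + q * y| = |p - q| * |x| := by
      rw [hyx]; rw [← abs_mul]; ring_nf
    have h2 : |p - q| < 1 := by
      rw [abs_lt]; constructor <;> linarith
    have h3 : |p * x + q * y| < |x| := by
      rw [h1]
      have := abs_pos.2 hx0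
      nlinarith
    calc |p * x + q * y| ^ r < |x| ^ r :=
          Real.rpow_lt_rpow (abs_nonneg _) h3 (by linarith)
      _ = p * |x| ^ r + q * |y| ^ r := by rw [← habs, ← add_mul, hpq, one_mul]
  · have h1 : |p * x + q * y| ^ r ≤ (p * |x| + q * |y|) ^ r := by
      apply Real.rpow_le_rpow (abs_nonneg _) _ (by linarith)
      calc |p * x + q * y| ≤ |p * x| + |q * y| := abs_add_le _ _
        _ = p * |x| + q * |y| := by rw [abs_mul, abs_mul, abs_of_pos hp, abs_of_pos hq]
    have h2 := (strictConvexOn_rpow hr).2 (abs_nonneg x) (abs_nonneg y) habs hp hq hpq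
    simp only [smul_eq_mul] at h2
    exact lt_of_le_of_lt h1 h2

lemma pair_lt {r : ℝ} (hr : 1 < r) {v w ε : ℝ} (hε : 0 < ε) (hvw : v + w < -(2*ε)) :
    |v + ε| ^ r + |w + ε| ^ r < |v| ^ r + |w| ^ r := by
  set d : ℝ := -(v + w) - ε with hd
  have hdε : ε < d := by simp [hd]; linarith
  have hdpos : 0 < d := by linarith
  set θ : ℝ := 1 - ε / d with hθ
  have h1θ : 1 - θ = ε / d := by simp [hθ]
  have hθpos : 0 < θ := by
    have : ε / d < 1 := (div_lt_one hdpos).2 hdε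
    simp [hθ]; linarith
  have h1θpos : 0 < 1 - θ := by rw [h1θ]; positivity
  have hsum : θ + (1 - θ) = 1 := by ring
  have hvd : v + d = -(w + ε) := by rw [hd]; ring
  have hwd : w + d = -(v + ε) := by rw [hd]; ring
  have hcomb : ∀ u : ℝ, θ * u + (1 - θ) * (u + d) = u + ε := by
    intro u
    have hεd : (1 - θ) * d = ε := by rw [h1θ]; field_simp
    calc θ * u + (1 - θ) * (u + d) = (θ + (1 - θ)) * u + (1 - θ) * d := by ring
      _ = u + ε := by rw [hsum, hεd, one_mul]
  have key : ∀ u u' : ℝ, u + d = -(u' + ε) →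
      |u + ε| ^ r < θ * |u| ^ r + (1 - θ) * |u' + ε| ^ r := by
    intro u u' hud
    have hne : u ≠ u + d := by intro h; nlinarith [congrArg (· - u) h]
    have := (strictConvexOn_abs_rpow hr).2 (mem_univ u) (mem_univ (u + d)) hne hθpos h1θpos hsum
    simp only [smul_eq_mul] at this
    rw [hcomb u, hud, abs_neg] at this
    exact this
  have k1 := key v w hvd
  have k2 := key w v hwd
  nlinarith [k1, k2]

lemma reflect_mp (α β : ℝ) :
    MeasurePreserving (fun x : ℝ => α + β - x)
      (volume.restrict (Icc α β)) (volume.restrict (Icc α β)) := by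
  have h0 : MeasurePreserving (fun x : ℝ => α + β - x) volume volume :=
    Measure.measurePreserving_sub_left volume (α + β)
  have hpre : (fun x : ℝ => α + β - x) ⁻¹' (Icc α β) = Icc α β := by
    ext x
    simp only [mem_preimage, mem_Icc]
    constructor <;> rintro ⟨h1, h2⟩ <;> constructor <;> linarith
  have := h0.restrict_preimage (s := Icc α β) measurableSet_Icc
  rwa [hpre] at this

def reflEquiv (k : ℝ) : ℝ ≃ᵐ ℝ where
  toEquiv :=
    { toFun := fun x => k - x
      invFun := fun x => k - x
      left_inv := fun x => by simp
      right_inv := fun x => by simp }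
  measurable_toFun := measurable_const.sub measurable_id
  measurable_invFun := measurable_const.sub measurable_id

lemma reflect_emb (α β : ℝ) : MeasurableEmbedding (fun x : ℝ => α + β - x) :=
  (reflEquiv (α + β)).measurableEmbedding

lemma key_lemma (α β : ℝ) (hαβ : α < β) (f : ℝ → ℝ) (hmeas : Measurable f)
    (a b c : ℝ)
    (hcone : ∀ x ∈ Set.Icc α β, |f x - (a * x + b)| ≤ c * |x - (α + β) / 2|)
    (r : ℝ) (hr : 1 < r) (τ : ℝ)
    (hτ : ∀ t : ℝ,
      eLpNorm (fun x => f x - τ) (ENNReal.ofReal r) (volume.restrict (Set.Icc α β))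
        ≤ eLpNorm (fun x => f x - t) (ENNReal.ofReal r) (volume.restrict (Set.Icc α β))) :
    τ - f ((α + β) / 2) ≤ c * (β - α) / 2 := by
  by_contra hcon
  push_neg at hcon
  have hr0 : (0:ℝ) < r := lt_trans one_pos hr
  have hξmem : (α + β) / 2 ∈ Icc α β := ⟨by linarith, by linarith⟩
  have habs : ∀ x ∈ Icc α β, |x - (α + β) / 2| ≤ (β - α) / 2 := by
    intro x hx
    rw [abs_le]
    obtain ⟨h1, h2⟩ := hx
    constructor <;> linarith
  have hc : 0 ≤ c := by
    have h1 := hcone β ⟨hαβ.le, le_refl β⟩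
    have h2 : |β - (α + β) / 2| = (β - α) / 2 := by
      rw [abs_of_nonneg (by linarith)]; ring
    rw [h2] at h1
    nlinarith [abs_nonneg (f β - (a * β + b))]
  have hfξ : f ((α + β) / 2) = a * ((α + β) / 2) + b := by
    have h0 := hcone _ hξmem
    simp only [sub_self, abs_zero, mul_zero] at h0
    have h1 := abs_nonneg (f ((α + β) / 2) - (a * ((α + β) / 2) + b))
    have h2 := abs_eq_zero.1 (le_antisymm h0 h1)
    linarith
  set ε : ℝ := (τ - f ((α + β) / 2) - c * (β - α) / 2) / 2 with hεdef
  have hε : 0 < ε := by simp only [hεdef]; linarith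
  have hmemσ : ∀ x ∈ Icc α β, α + β - x ∈ Icc α β := by
    intro x hx
    exact ⟨by linarith [hx.2], by linarith [hx.1]⟩
  have habs2 : ∀ x : ℝ, |α + β - x - (α + β) / 2| = |x - (α + β) / 2| := by
    intro x
    rw [show α + β - x - (α + β) / 2 = -(x - (α + β) / 2) by ring, abs_neg]
  have hsum : ∀ x ∈ Icc α β,
      (f x - τ) + (f (α + β - x) - τ) < -(2 * ε) := by
    intro x hx
    have h1 := le_of_abs_le (hcone x hx)
    have h2 := le_of_abs_le (hcone (α + β - x) (hmemσ x hx))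
    rw [habs2] at h2
    have h3 : c * |x - (α + β) / 2| ≤ c * ((β - α) / 2) :=
      mul_le_mul_of_nonneg_left (habs x hx) hc
    have hτval : τ = f ((α + β) / 2) + c * (β - α) / 2 + 2 * ε := by
      simp only [hεdef]; ring
    nlinarith [h1, h2, h3]
  have hpt : ∀ x ∈ Icc α β,
      |f x - (τ - ε)| ^ r + |f (α + β - x) - (τ - ε)| ^ r
        < |f x - τ| ^ r + |f (α + β - x) - τ| ^ r := by
    intro x hx
    have e1 : f x - (τ - ε) = (f x - τ) + ε := by ring
    have e2 : f (α + β - x) - (τ - ε) = (f (α + β - x) - τ) + ε := by ring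
    rw [e1, e2]
    exact pair_lt hr hε (hsum x hx)
  -- boundedness / integrability
  set K : ℝ := |a| * (|α| + |β|) + |b| + c * (β - α) with hK
  have hbound : ∀ x ∈ Icc α β, |f x| ≤ K := by
    intro x hx
    have h1 := abs_sub_abs_le_abs_sub (f x) (a * x + b)
    have h2 := hcone x hx
    have h3 : |a * x + b| ≤ |a| * (|α| + |β|) + |b| := by
      have hx1 : |x| ≤ |α| + |β| := by
        rw [abs_le]
        constructor
        · have := neg_abs_le α; linarith [hx.1, abs_nonneg β]
        · have := le_abs_self β; linarith [hx.2, abs_nonneg α]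
      calc |a * x + b| ≤ |a * x| + |b| := abs_add_le _ _
        _ = |a| * |x| + |b| := by rw [abs_mul]
        _ ≤ |a| * (|α| + |β|) + |b| := by
            have := mul_le_mul_of_nonneg_left hx1 (abs_nonneg a); linarith
    have h4 : c * |x - (α + β) / 2| ≤ c * (β - α) := by
      have h5 : |x - (α + β) / 2| ≤ β - α := le_trans (habs x hx) (by linarith)
      exact mul_le_mul_of_nonneg_left h5 hc
    simp only [hK]
    linarith
  have hμfin : volume (Icc α β) ≠ ⊤ := by
    rw [Real.volume_Icc]; exact ENNReal.ofReal_ne_top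
  have hint : ∀ s : ℝ, IntegrableOn (fun x => |f x - s| ^ r) (Icc α β) volume := by
    intro s
    apply Measure.integrableOn_of_bounded (M := (K + |s|) ^ r) hμfin
    · exact ((hmeas.sub measurable_const).abs.pow_const r).aestronglyMeasurable
    · filter_upwards [ae_restrict_mem measurableSet_Icc] with x hx
      rw [Real.norm_eq_abs, abs_of_nonneg (Real.rpow_nonneg (abs_nonneg _) r)]
      apply Real.rpow_le_rpow (abs_nonneg _) _ (le_of_lt hr0)
      calc |f x - s| ≤ |f x| + |s| := abs_sub (f x) s
        _ ≤ K + |s| := by linarith [hbound x hx]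
  have hintσ : ∀ s : ℝ,
      IntegrableOn (fun x => |f (α + β - x) - s| ^ r) (Icc α β) volume := by
    intro s
    exact (MeasurePreserving.integrable_comp_emb (g := fun y => |f y - s| ^ r)
      (reflect_mp α β) (reflect_emb α β)).2 (hint s)
  have hrefl : ∀ s : ℝ,
      (∫ x in Icc α β, |f (α + β - x) - s| ^ r) = ∫ x in Icc α β, |f x - s| ^ r :=
    fun s => (reflect_mp α β).integral_comp (reflect_emb α β) (fun y => |f y - s| ^ r)
  -- strict integral inequality
  set P : ℝ → ℝ := fun x =>
    (|f x - τ| ^ r + |f (α + β - x) - τ| ^ r)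
      - (|f x - (τ - ε)| ^ r + |f (α + β - x) - (τ - ε)| ^ r) with hP
  have hPint : IntegrableOn P (Icc α β) volume :=
    (((hint τ).add (hintσ τ)).sub ((hint (τ - ε)).add (hintσ (τ - ε))))
  have hPpos : ∀ x ∈ Icc α β, 0 < P x := fun x hx => sub_pos.2 (hpt x hx)
  have h0 : 0 < ∫ x in Icc α β, P x := by
    rw [setIntegral_pos_iff_support_of_nonneg_ae ?_ hPint]
    · refine lt_of_lt_of_le ?_ (measure_mono (fun x hx => ⟨ne_of_gt (hPpos x hx), hx⟩))
      rw [Real.volume_Icc]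
      simp only [ENNReal.ofReal_pos]
      linarith
    · filter_upwards [ae_restrict_mem measurableSet_Icc] with x hx
      exact le_of_lt (hPpos x hx)
  have hAB : (∫ x in Icc α β, |f x - (τ - ε)| ^ r) < ∫ x in Icc α β, |f x - τ| ^ r := by
    have i1 : Integrable (fun x => |f x - τ| ^ r + |f (α + β - x) - τ| ^ r)
        (volume.restrict (Icc α β)) := (hint τ).add (hintσ τ)
    have i2 : Integrable (fun x => |f x - (τ - ε)| ^ r + |f (α + β - x) - (τ - ε)| ^ r)
        (volume.restrict (Icc α β)) := (hint (τ - ε)).add (hintσ (τ - ε))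
    have e0 : (∫ x in Icc α β, P x)
        = (∫ x in Icc α β, (|f x - τ| ^ r + |f (α + β - x) - τ| ^ r))
          - ∫ x in Icc α β, (|f x - (τ - ε)| ^ r + |f (α + β - x) - (τ - ε)| ^ r) :=
      integral_sub i1 i2
    have e1 : (∫ x in Icc α β, (|f x - τ| ^ r + |f (α + β - x) - τ| ^ r))
        = (∫ x in Icc α β, |f x - τ| ^ r) + ∫ x in Icc α β, |f (α + β - x) - τ| ^ r :=
      integral_add (hint τ) (hintσ τ)
    have e2 : (∫ x in Icc α β, (|f x - (τ - ε)| ^ r + |f (α + β - x) - (τ - ε)| ^ r))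
        = (∫ x in Icc α β, |f x - (τ - ε)| ^ r)
          + ∫ x in Icc α β, |f (α + β - x) - (τ - ε)| ^ r :=
      integral_add (hint (τ - ε)) (hintσ (τ - ε))
    rw [e0, e1, e2, hrefl τ, hrefl (τ - ε)] at h0
    linarith
  -- convert to eLpNorm
  have hp0 : ENNReal.ofReal r ≠ 0 := by
    simp only [ne_eq, ENNReal.ofReal_eq_zero, not_le]; linarith
  have hptop : ENNReal.ofReal r ≠ ⊤ := ENNReal.ofReal_ne_top
  have help : ∀ s : ℝ,
      eLpNorm (fun x => f x - s) (ENNReal.ofReal r) (volume.restrict (Icc α β))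
        = ENNReal.ofReal (∫ x in Icc α β, |f x - s| ^ r) ^ (1 / r) := by
    intro s
    rw [eLpNorm_eq_lintegral_rpow_enorm_toReal hp0 hptop, ENNReal.toReal_ofReal (le_of_lt hr0)]
    congr 1
    have heq : ∀ x : ℝ, ‖f x - s‖ₑ ^ r = ENNReal.ofReal (|f x - s| ^ r) := by
      intro x
      rw [Real.enorm_eq_ofReal_abs,
        ← ENNReal.ofReal_rpow_of_nonneg (abs_nonneg _) (le_of_lt hr0)]
    simp_rw [heq]
    rw [← ofReal_integral_eq_lintegral_ofReal (hint s)
      (Filter.Eventually.of_forall (fun x => Real.rpow_nonneg (abs_nonneg _) r))]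
  have hlt : eLpNorm (fun x => f x - (τ - ε)) (ENNReal.ofReal r) (volume.restrict (Icc α β))
      < eLpNorm (fun x => f x - τ) (ENNReal.ofReal r) (volume.restrict (Icc α β)) := by
    rw [help (τ - ε), help τ]
    apply ENNReal.rpow_lt_rpow _ (by positivity)
    exact (ENNReal.ofReal_lt_ofReal_iff_of_nonneg
      (integral_nonneg (fun x => Real.rpow_nonneg (abs_nonneg _) r))).2 hAB
  exact absurd (hτ (τ - ε)) (not_le.2 hlt)

theorem stmt14 (α β : ℝ) (hαβ : α < β) (f : ℝ → ℝ) (hmeas : Measurable f)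
    (a b c : ℝ)
    (hcone : ∀ x ∈ Set.Icc α β, |f x - (a * x + b)| ≤ c * |x - (α + β) / 2|) :
    MemLp f ⊤ (volume.restrict (Set.Icc α β)) ∧
      ∀ r : ℝ, 1 < r → ∀ τ : ℝ,
        (∀ t : ℝ,
          eLpNorm (fun x => f x - τ) (ENNReal.ofReal r) (volume.restrict (Set.Icc α β))
            ≤ eLpNorm (fun x => f x - t) (ENNReal.ofReal r)
                (volume.restrict (Set.Icc α β))) →
        |τ - f ((α + β) / 2)| ≤ c * (β - α) / 2 := by
  have habs : ∀ x ∈ Icc α β, |x - (α + β) / 2| ≤ (β - α) / 2 := by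
    intro x hx
    rw [abs_le]
    obtain ⟨h1, h2⟩ := hx
    constructor <;> linarith
  have hc : 0 ≤ c := by
    have h1 := hcone β ⟨hαβ.le, le_refl β⟩
    have h2 : |β - (α + β) / 2| = (β - α) / 2 := by
      rw [abs_of_nonneg (by linarith)]; ring
    rw [h2] at h1
    nlinarith [abs_nonneg (f β - (a * β + b))]
  set K : ℝ := |a| * (|α| + |β|) + |b| + c * (β - α) with hK
  have hbound : ∀ x ∈ Icc α β, |f x| ≤ K := by
    intro x hx
    have h1 := abs_sub_abs_le_abs_sub (f x) (a * x + b)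
    have h2 := hcone x hx
    have h3 : |a * x + b| ≤ |a| * (|α| + |β|) + |b| := by
      have hx1 : |x| ≤ |α| + |β| := by
        rw [abs_le]
        constructor
        · have := neg_abs_le α; linarith [hx.1, abs_nonneg β]
        · have := le_abs_self β; linarith [hx.2, abs_nonneg α]
      calc |a * x + b| ≤ |a * x| + |b| := abs_add_le _ _
        _ = |a| * |x| + |b| := by rw [abs_mul]
        _ ≤ |a| * (|α| + |β|) + |b| := by
            have := mul_le_mul_of_nonneg_left hx1 (abs_nonneg a); linarith
    have h4 : c * |x - (α + β) / 2| ≤ c * (β - α) := by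
      have h5 : |x - (α + β) / 2| ≤ β - α := le_trans (habs x hx) (by linarith)
      exact mul_le_mul_of_nonneg_left h5 hc
    simp only [hK]
    linarith
  have habs2 : ∀ x : ℝ, |α + β - x - (α + β) / 2| = |x - (α + β) / 2| := by
    intro x
    rw [show α + β - x - (α + β) / 2 = -(x - (α + β) / 2) by ring, abs_neg]
  constructor
  · refine memLp_top_of_bound hmeas.aestronglyMeasurable K ?_
    filter_upwards [ae_restrict_mem measurableSet_Icc] with x hx
    rw [Real.norm_eq_abs]
    exact hbound x hx
  · intro r hr τ hτ
    have h1 := key_lemma α β hαβ f hmeas a b c hcone r hr τ hτ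
    -- reflected/negated function
    set g : ℝ → ℝ := fun x => -f (α + β - x) with hg
    have hgmeas : Measurable g := (hmeas.comp (measurable_const.sub measurable_id)).neg
    have hgcone : ∀ x ∈ Set.Icc α β,
        |g x - (a * x + (-(a * (α + β)) - b))| ≤ c * |x - (α + β) / 2| := by
      intro x hx
      have hx' : α + β - x ∈ Set.Icc α β := ⟨by linarith [hx.2], by linarith [hx.1]⟩
      have h2 := hcone _ hx'
      have e : g x - (a * x + (-(a * (α + β)) - b))
          = -(f (α + β - x) - (a * (α + β - x) + b)) := by
        simp only [hg]; ring
      rw [e, abs_neg]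
      calc |f (α + β - x) - (a * (α + β - x) + b)|
          ≤ c * |α + β - x - (α + β) / 2| := h2
        _ = c * |x - (α + β) / 2| := by rw [habs2]
    have hkeyeq : ∀ s : ℝ,
        eLpNorm (fun x => g x - s) (ENNReal.ofReal r) (volume.restrict (Set.Icc α β))
          = eLpNorm (fun x => f x - (-s)) (ENNReal.ofReal r)
              (volume.restrict (Set.Icc α β)) := by
      intro s
      have e : (fun x => g x - s) = fun x => -((fun y => f y - (-s)) (α + β - x)) := by
        funext x; simp only [hg]; ring
      rw [e]
      have hmeasg : AEStronglyMeasurable (fun y => f y - (-s))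
          (volume.restrict (Set.Icc α β)) :=
        (hmeas.sub measurable_const).aestronglyMeasurable
      calc eLpNorm (fun x => -((fun y => f y - (-s)) (α + β - x)))
            (ENNReal.ofReal r) (volume.restrict (Set.Icc α β))
          = eLpNorm (fun x => (fun y => f y - (-s)) (α + β - x))
            (ENNReal.ofReal r) (volume.restrict (Set.Icc α β)) :=
            eLpNorm_neg _ _ _
        _ = eLpNorm (fun y => f y - (-s)) (ENNReal.ofReal r)
            (volume.restrict (Set.Icc α β)) :=
            eLpNorm_comp_measurePreserving (f := fun x : ℝ => α + β - x)
              (g := fun y => f y - (-s)) hmeasg (reflect_mp α β)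
    have hgτ : ∀ t : ℝ,
        eLpNorm (fun x => g x - (-τ)) (ENNReal.ofReal r) (volume.restrict (Set.Icc α β))
          ≤ eLpNorm (fun x => g x - t) (ENNReal.ofReal r)
              (volume.restrict (Set.Icc α β)) := by
      intro t
      rw [hkeyeq, hkeyeq, neg_neg]
      exact hτ (-t)
    have h2 := key_lemma α β hαβ g hgmeas a (-(a * (α + β)) - b) c hgcone r hr (-τ) hgτ
    have hgξ : g ((α + β) / 2) = -f ((α + β) / 2) := by
      simp only [hg]
      rw [show α + β - (α + β) / 2 = (α + β) / 2 by ring]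
    rw [abs_le]
    refine ⟨by linarith [h2, hgξ], by linarith [h1]⟩
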